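/- Let Fbulk: V → R have L_f-Lipschitz gradient f on a convex set containing Q^{n-1}, Q^n, Q^{n+1}. Then the extrapolated BDF2 pairing satisfies ⟨3Q^{n+1} − 4Q^n + Q^{n-1}, 2f(Q^n) − f(Q^{n-1})⟩ ≥ [3Fbulk(Q^{n+1}) − Fbulk(Q^n)] − [3Fbulk(Q^n) − Fbulk(Q^{n-1})] − 3L_f‖Q^{n+1} − Q^n‖² − 3L_f‖Q^n − Q^{n-1}‖², i.e., d_{2t}Fbulk(Q^{n+1}) ≤ ⟨d_{2t}Q^{n+1}, B₂(f(Q^n))⟩ + 3L_f‖d_tQ^{n+1}‖² + 3L_f‖d_tQ^n‖², with d_{2t}g^{n+1} = 3g^{n+1} − 4g^n + g^{n-1}, d_tg^{n+1} = g^{n+1} − g^n, B₂(g^n) = 2g^n − g^{n-1}, and d_{2t}Fbulk(Q^{n+1}) := 3Fbulk(Q^{n+1}) − 4Fbulk(Q^n) + Fbulk(Q^{n-1}). -/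

import Mathlib

open RealInnerProductSpace

section Aux

variable {V : Type*} [NormedAddCommGroup V] [InnerProductSpace ℝ V] [CompleteSpace V]

lemma descent_lemma (Fbulk : V → ℝ) (hF : ContDiff ℝ 2 Fbulk) (s : Set V) (hs : Convex ℝ s)
    (L : ℝ)
    (hL : ∀ x ∈ s, ∀ y ∈ s, ‖gradient Fbulk x - gradient Fbulk y‖ ≤ L * ‖x - y‖)
    (x y : V) (hx : x ∈ s) (hy : y ∈ s) :
    |Fbulk y - Fbulk x - ⟪gradient Fbulk x, y - x⟫| ≤ L / 2 * ‖y - x‖ ^ 2 := by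
  have hdiff : ∀ z : V, DifferentiableAt ℝ Fbulk z := fun z =>
    (hF.differentiable (by norm_num)).differentiableAt
  set p : ℝ → V := fun t => x + t • (y - x) with hp
  have hps : ∀ t ∈ Set.Icc (0:ℝ) 1, p t ∈ s := by
    intro t ht
    have := hs hx hy (by linarith [ht.1, ht.2] : (0:ℝ) ≤ 1 - t) ht.1 (by ring)
    convert this using 1
    simp only [hp]
    module
  have hcontgrad : Continuous fun z : V => gradient Fbulk z := by
    have : Continuous fun z : V => fderiv ℝ Fbulk z :=
      (hF.fderiv_right (m := 0) (by norm_num)).continuous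
    exact (InnerProductSpace.toDual ℝ V).symm.continuous.comp this
  have hpc : Continuous p := by continuity
  -- derivative of g t = Fbulk (p t)
  have hderiv : ∀ t : ℝ, HasDerivAt (fun u => Fbulk (p u))
      (⟪gradient Fbulk (p t), y - x⟫) t := by
    intro t
    have h1 : HasDerivAt p (y - x) t := by
      have : HasDerivAt (fun u : ℝ => u • (y - x)) ((1:ℝ) • (y - x)) t :=
        (hasDerivAt_id t).smul_const (y - x)
      simpa [hp] using this.const_add x
    have h2 : HasFDerivAt Fbulk
        (InnerProductSpace.toDual ℝ V (gradient Fbulk (p t))) (p t) :=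
      (hdiff (p t)).hasGradientAt.hasFDerivAt
    have := h2.comp_hasDerivAt t h1
    exact this
  have hcont : Continuous fun t : ℝ => ⟪gradient Fbulk (p t), y - x⟫ := by
    exact ((hcontgrad.comp hpc).inner continuous_const)
  have hFTC : Fbulk y - Fbulk x
      = ∫ t in (0:ℝ)..1, ⟪gradient Fbulk (p t), y - x⟫ := by
    have := intervalIntegral.integral_eq_sub_of_hasDerivAt
      (f := fun u => Fbulk (p u)) (a := (0:ℝ)) (b := 1)
      (fun t _ => hderiv t) (hcont.intervalIntegrable 0 1)
    simp only [hp] at this ⊢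
    rw [this]
    simp
  -- pointwise bound on the integrand deviation
  have hbound : ∀ t ∈ Set.Icc (0:ℝ) 1,
      |⟪gradient Fbulk (p t), y - x⟫ - ⟪gradient Fbulk x, y - x⟫|
        ≤ L * t * ‖y - x‖ ^ 2 := by
    intro t ht
    have hmem := hps t ht
    have hsub := inner_sub_left (𝕜 := ℝ) (gradient Fbulk (p t)) (gradient Fbulk x) (y - x)
    rw [← hsub]
    have hcs : |⟪gradient Fbulk (p t) - gradient Fbulk x, y - x⟫|
        ≤ ‖gradient Fbulk (p t) - gradient Fbulk x‖ * ‖y - x‖ :=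
      abs_real_inner_le_norm _ _
    have hlip : ‖gradient Fbulk (p t) - gradient Fbulk x‖ ≤ L * (t * ‖y - x‖) := by
      have := hL (p t) hmem x hx
      have hpt : ‖p t - x‖ = t * ‖y - x‖ := by
        simp [hp, norm_smul, abs_of_nonneg ht.1]
      rwa [hpt] at this
    calc |⟪gradient Fbulk (p t) - gradient Fbulk x, y - x⟫|
        ≤ ‖gradient Fbulk (p t) - gradient Fbulk x‖ * ‖y - x‖ := hcs
      _ ≤ (L * (t * ‖y - x‖)) * ‖y - x‖ :=
          mul_le_mul_of_nonneg_right hlip (norm_nonneg _)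
      _ = L * t * ‖y - x‖ ^ 2 := by ring
  -- integrate the bound
  have key : Fbulk y - Fbulk x - ⟪gradient Fbulk x, y - x⟫
      = ∫ t in (0:ℝ)..1, (⟪gradient Fbulk (p t), y - x⟫ - ⟪gradient Fbulk x, y - x⟫) := by
    rw [intervalIntegral.integral_sub (hcont.intervalIntegrable 0 1)
      (continuous_const.intervalIntegrable 0 1)]
    rw [← hFTC]
    simp
  rw [key]
  have habs : |∫ t in (0:ℝ)..1, (⟪gradient Fbulk (p t), y - x⟫ - ⟪gradient Fbulk x, y - x⟫)|
      ≤ ∫ t in (0:ℝ)..1, |⟪gradient Fbulk (p t), y - x⟫ - ⟪gradient Fbulk x, y - x⟫| :=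
    intervalIntegral.abs_integral_le_integral_abs (by norm_num)
  have hmono : ∫ t in (0:ℝ)..1, |⟪gradient Fbulk (p t), y - x⟫ - ⟪gradient Fbulk x, y - x⟫|
      ≤ ∫ t in (0:ℝ)..1, L * t * ‖y - x‖ ^ 2 := by
    apply intervalIntegral.integral_mono_on (by norm_num)
    · exact ((hcont.sub continuous_const).abs.intervalIntegrable 0 1)
    · exact (((continuous_const.mul continuous_id).mul continuous_const).intervalIntegrable 0 1)
    · exact hbound
  have hval : ∫ t in (0:ℝ)..1, L * t * ‖y - x‖ ^ 2 = L / 2 * ‖y - x‖ ^ 2 := by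
    have hre : (fun t : ℝ => L * t * ‖y - x‖ ^ 2) = fun t : ℝ => (L * ‖y - x‖ ^ 2) * t := by
      funext t; ring
    rw [hre, intervalIntegral.integral_const_mul, integral_id]
    ring
  calc |∫ t in (0:ℝ)..1, (⟪gradient Fbulk (p t), y - x⟫ - ⟪gradient Fbulk x, y - x⟫)|
      ≤ ∫ t in (0:ℝ)..1, |⟪gradient Fbulk (p t), y - x⟫ - ⟪gradient Fbulk x, y - x⟫| := habs
    _ ≤ ∫ t in (0:ℝ)..1, L * t * ‖y - x‖ ^ 2 := hmono
    _ = L / 2 * ‖y - x‖ ^ 2 := hval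

end Aux

theorem stmt16 {V : Type*} [NormedAddCommGroup V] [InnerProductSpace ℝ V] [CompleteSpace V]
    (Fbulk : V → ℝ) (hF : ContDiff ℝ 2 Fbulk) (s : Set V) (hs : Convex ℝ s)
    (L : ℝ)
    (hL : ∀ x ∈ s, ∀ y ∈ s, ‖gradient Fbulk x - gradient Fbulk y‖ ≤ L * ‖x - y‖)
    (Q0 Q1 Q2 : V) (h0 : Q0 ∈ s) (h1 : Q1 ∈ s) (h2 : Q2 ∈ s) :
    ⟪3 • Q2 - 4 • Q1 + Q0, 2 • gradient Fbulk Q1 - gradient Fbulk Q0⟫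
      ≥ (3 * Fbulk Q2 - Fbulk Q1) - (3 * Fbulk Q1 - Fbulk Q0)
        - 3 * L * ‖Q2 - Q1‖ ^ 2 - 3 * L * ‖Q1 - Q0‖ ^ 2 := by
  by_cases hL0 : 0 ≤ L
  · set f := gradient Fbulk with hf
    -- Taylor bounds (two-sided)
    have hD1 := descent_lemma Fbulk hF s hs L hL Q1 Q2 h1 h2
    have hD2 := descent_lemma Fbulk hF s hs L hL Q1 Q0 h1 h0
    have hT1' : ⟪f Q1, Q2 - Q1⟫ ≥ Fbulk Q2 - Fbulk Q1 - L / 2 * ‖Q2 - Q1‖ ^ 2 := by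
      have := abs_le.mp hD1
      simp only [← hf] at this
      linarith [this.1, this.2]
    have hT2' : ⟪f Q1, Q0 - Q1⟫ ≥ Fbulk Q0 - Fbulk Q1 - L / 2 * ‖Q0 - Q1‖ ^ 2 := by
      have := abs_le.mp hD2
      simp only [← hf] at this
      linarith [this.1, this.2]
    -- Lipschitz bound
    have hlip : ‖f Q1 - f Q0‖ ≤ L * ‖Q1 - Q0‖ := hL Q1 h1 Q0 h0
    -- cross term 1
    have hcs1 : ⟪Q2 - Q1, f Q1 - f Q0⟫ ≥ -(L * ‖Q1 - Q0‖ * ‖Q2 - Q1‖) := by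
      have h1' := abs_real_inner_le_norm (Q2 - Q1) (f Q1 - f Q0)
      have h2' : ‖Q2 - Q1‖ * ‖f Q1 - f Q0‖ ≤ ‖Q2 - Q1‖ * (L * ‖Q1 - Q0‖) :=
        mul_le_mul_of_nonneg_left hlip (norm_nonneg _)
      have := neg_abs_le (⟪Q2 - Q1, f Q1 - f Q0⟫)
      nlinarith
    -- cross term 2
    have hcs2 : ⟪Q1 - Q0, f Q1 - f Q0⟫ ≤ L * ‖Q1 - Q0‖ ^ 2 := by
      have h1' := abs_real_inner_le_norm (Q1 - Q0) (f Q1 - f Q0)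
      have h2' : ‖Q1 - Q0‖ * ‖f Q1 - f Q0‖ ≤ ‖Q1 - Q0‖ * (L * ‖Q1 - Q0‖) :=
        mul_le_mul_of_nonneg_left hlip (norm_nonneg _)
      have := le_abs_self (⟪Q1 - Q0, f Q1 - f Q0⟫)
      nlinarith
    -- AM-GM
    have hamgm : -(L * ‖Q1 - Q0‖ * ‖Q2 - Q1‖)
        ≥ -(L / 2 * (‖Q2 - Q1‖ ^ 2 + ‖Q1 - Q0‖ ^ 2)) := by
      nlinarith [sq_nonneg (‖Q2 - Q1‖ - ‖Q1 - Q0‖)]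
    -- expand LHS
    have hexp : ⟪3 • Q2 - 4 • Q1 + Q0, 2 • f Q1 - f Q0⟫
        = 3 * ⟪Q2 - Q1, f Q1⟫ + ⟪Q0 - Q1, f Q1⟫
          + 3 * ⟪Q2 - Q1, f Q1 - f Q0⟫ - ⟪Q1 - Q0, f Q1 - f Q0⟫ := by
      have hv : 3 • Q2 - 4 • Q1 + Q0 = (3:ℝ) • (Q2 - Q1) - (Q1 - Q0) := by module
      have hw : 2 • f Q1 - f Q0 = f Q1 + (f Q1 - f Q0) := by module
      rw [hv, hw]
      simp only [inner_sub_left, inner_add_right, real_inner_smul_left]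
      ring
    have hnorm : ‖Q0 - Q1‖ = ‖Q1 - Q0‖ := norm_sub_rev _ _
    rw [hexp]
    have hsy1 : ⟪Q2 - Q1, f Q1⟫ = ⟪f Q1, Q2 - Q1⟫ := real_inner_comm _ _
    have hsy2 : ⟪Q0 - Q1, f Q1⟫ = ⟪f Q1, Q0 - Q1⟫ := real_inner_comm _ _
    rw [hsy1, hsy2]
    rw [hnorm] at hT2'
    linarith [hcs1, hamgm, hcs2, hT1', hT2']
  · -- L < 0 forces all points equal
    push_neg at hL0
    have heq : ∀ x ∈ s, ∀ y ∈ s, x = y := by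
      intro x hx y hy
      by_contra hne
      have h := hL x hx y hy
      have : (0:ℝ) < ‖x - y‖ := by
        rw [norm_pos_iff, sub_ne_zero]; exact hne
      nlinarith [norm_nonneg (gradient Fbulk x - gradient Fbulk y)]
    have e1 : Q1 = Q0 := heq Q1 h1 Q0 h0
    have e2 : Q2 = Q1 := heq Q2 h2 Q1 h1
    subst e1 e2
    have hz : 3 • Q2 - 4 • Q2 + Q2 = (0:V) := by module
    rw [hz]
    simp
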